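/- For every data exchange setting S, every positive query Q (a union of conjunctive queries) over the target schema, and every source instance I, the supported certain answers to Q over I w.r.t. S equal the classical certain answers to Q over I w.r.t. S. -/

import Mathlib

namespace DE

abbrev Var := ℕ

inductive Term (C : Type) where
  | const : C → Term C
  | null : ℕ → Term C

structure Atom (R C : Type) where
  rel : R
  args : List (Var ⊕ C)

structure Fact (R C : Type) where
  rel : R
  args : List (Term C)

abbrev Instance (R C : Type) := Set (Fact R C)

def termOf {C : Type} (h : Var → Term C) : Var ⊕ C → Term C
  | Sum.inl v => h v
  | Sum.inr c => Term.const c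

def applyAtom {R C : Type} (h : Var → Term C) (a : Atom R C) : Fact R C :=
  ⟨a.rel, a.args.map (termOf h)⟩

/-- `h` maps every atom of `as` into the instance `I`. -/
def holdsBody {R C : Type} (I : Instance R C) (h : Var → Term C)
    (as : List (Atom R C)) : Prop :=
  ∀ a ∈ as, applyAtom h a ∈ I

/-- A tuple-generating dependency. -/
structure TGD (R C : Type) where
  body : List (Atom R C)
  head : List (Atom R C)
  frontier : List Var
  exvars : List Var

def varsOf {R C : Type} (as : List (Atom R C)) : Set Var :=
  {v | ∃ a ∈ as, (Sum.inl v : Var ⊕ C) ∈ a.args}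

/-- Well-formedness of a TGD: frontier variables occur in the body, existential
variables do not, and every head variable is a frontier or existential variable. -/
def TGD.wf {R C : Type} (ρ : TGD R C) : Prop :=
  (∀ v ∈ ρ.frontier, v ∈ varsOf ρ.body) ∧
  (∀ z ∈ ρ.exvars, z ∉ varsOf ρ.body) ∧
  (∀ v ∈ varsOf ρ.head, v ∈ ρ.frontier ∨ v ∈ ρ.exvars)

/-- Satisfaction of a TGD by an instance. -/
def satTGD {R C : Type} (I : Instance R C) (ρ : TGD R C) : Prop :=
  ∀ h : Var → Term C, holdsBody I h ρ.body →
    ∃ h' : Var → Term C, (∀ v ∈ varsOf ρ.body, h' v = h v) ∧ holdsBody I h' ρ.head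

/-- An equality-generating dependency. -/
structure EGD (R C : Type) where
  body : List (Atom R C)
  lhs : Var
  rhs : Var

def satEGD {R C : Type} (I : Instance R C) (η : EGD R C) : Prop :=
  ∀ h : Var → Term C, holdsBody I h η.body → h η.lhs = h η.rhs

/-- An ex-choice: given a TGD and a tuple of constants for its frontier,
a constant for each existential variable. -/
abbrev ExChoice (R C : Type) := TGD R C → List C → Var → C

def constHom {C : Type} (h : Var → C) : Var → Term C := fun v => Term.const (h v)

/-- `I` satisfies all ground versions of the TGD `ρ` that are coherent with `γ`. -/
def satTGDcoh {R C : Type} (I : Instance R C) (γ : ExChoice R C) (ρ : TGD R C) : Prop :=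
  ∀ h : Var → C, (∀ z ∈ ρ.exvars, h z = γ ρ (ρ.frontier.map h) z) →
    holdsBody I (constHom h) ρ.body → holdsBody I (constHom h) ρ.head

/-- A data exchange setting: source-to-target TGDs, target TGDs, target EGDs. -/
structure Setting (R C : Type) where
  sigmaST : List (TGD R C)
  sigmaT : List (TGD R C)
  sigmaE : List (EGD R C)

def Setting.wf {R C : Type} (S : Setting R C) : Prop :=
  ∀ ρ ∈ S.sigmaST ++ S.sigmaT, ρ.wf

/-- Classical solution: `I ∪ J` satisfies `Σst` and `J` satisfies `Σt`. -/
def classicalSolution {R C : Type} (S : Setting R C) (I J : Instance R C) : Prop :=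
  J.Finite ∧ (∀ ρ ∈ S.sigmaST, satTGD (I ∪ J) ρ) ∧
    (∀ ρ ∈ S.sigmaT, satTGD J ρ) ∧ (∀ η ∈ S.sigmaE, satEGD J η)

def supportedWith {R C : Type} (S : Setting R C) (γ : ExChoice R C)
    (I J : Instance R C) : Prop :=
  (∀ ρ ∈ S.sigmaST, satTGDcoh (I ∪ J) γ ρ) ∧
    (∀ ρ ∈ S.sigmaT, satTGDcoh J γ ρ) ∧ (∀ η ∈ S.sigmaE, satEGD J η)

/-- Supported solution: for some ex-choice `γ`, `I ∪ J` satisfies `Σst^γ`,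
`J` satisfies `Σt^γ`, and no proper subset of `J` does. -/
def supportedSolution {R C : Type} (S : Setting R C) (I J : Instance R C) : Prop :=
  J.Finite ∧ ∃ γ : ExChoice R C, supportedWith S γ I J ∧
    ∀ J' : Instance R C, J' ⊂ J → ¬ supportedWith S γ I J'

/-- An instance without labeled nulls (a database). -/
def nullFree {R C : Type} (I : Instance R C) : Prop :=
  ∀ f ∈ I, ∀ t ∈ f.args, ∃ c : C, t = Term.const c

end DE

namespace DE

/-- A conjunctive query with body atoms and a tuple of free variables. -/
structure CQ (R C : Type) where
  body : List (Atom R C)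
  free : List Var

def CQ.safe {R C : Type} (q : CQ R C) : Prop := ∀ v ∈ q.free, v ∈ varsOf q.body

def evalCQ {R C : Type} (q : CQ R C) (J : Instance R C) : Set (List (Term C)) :=
  {t | ∃ h : Var → Term C, holdsBody J h q.body ∧ t = q.free.map h}

/-- Output of a union of conjunctive queries (positive query). -/
def evalUCQ {R C : Type} (Q : List (CQ R C)) (J : Instance R C) : Set (List (Term C)) :=
  {t | ∃ q ∈ Q, t ∈ evalCQ q J}

/-- Classical certain answers. -/
def cert {R C : Type} (S : Setting R C) (I : Instance R C) (Q : List (CQ R C)) :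
    Set (List (Term C)) :=
  {t | ∀ J, classicalSolution S I J → t ∈ evalUCQ Q J}

/-- Supported certain answers. -/
def scert {R C : Type} (S : Setting R C) (I : Instance R C) (Q : List (CQ R C)) :
    Set (List (Term C)) :=
  {t | ∀ J, supportedSolution S I J → t ∈ evalUCQ Q J}

end DE

namespace DE
variable {R C : Type}

def Fact.map (σ : Term C → Term C) (f : Fact R C) : Fact R C := ⟨f.rel, f.args.map σ⟩

lemma applyAtom_congr {h h' : Var → Term C} {a : Atom R C}
    (hc : ∀ v, (Sum.inl v : Var ⊕ C) ∈ a.args → h v = h' v) :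
    applyAtom h a = applyAtom h' a := by
  unfold applyAtom
  congr 1
  apply List.map_congr_left
  rintro (v | c) hm
  · exact hc v hm
  · rfl

lemma holdsBody_congr {K : Instance R C} {h h' : Var → Term C} {as : List (Atom R C)}
    (hc : ∀ v ∈ varsOf (R := R) as, h v = h' v) (hb : holdsBody K h as) :
    holdsBody K h' as := by
  intro a ha
  rw [← applyAtom_congr (fun v hv => hc v ⟨a, ha, hv⟩)]
  exact hb a ha

lemma holdsBody_mono {K K' : Instance R C} {h : Var → Term C} {as : List (Atom R C)}
    (hsub : K ⊆ K') (hb : holdsBody K h as) : holdsBody K' h as :=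
  fun a ha => hsub (hb a ha)

lemma evalUCQ_mono {Q : List (CQ R C)} {J J' : Instance R C} (hsub : J ⊆ J') :
    evalUCQ Q J ⊆ evalUCQ Q J' := by
  rintro t ⟨q, hq, h, hb, ht⟩
  exact ⟨q, hq, h, holdsBody_mono hsub hb, ht⟩

def constsI (K : Instance R C) : Set C := {c | ∃ f ∈ K, Term.const c ∈ f.args}
def constsA (as : List (Atom R C)) : Set C := {c | ∃ a ∈ as, (Sum.inr c : Var ⊕ C) ∈ a.args}
def constsT (t : List (Term C)) : Set C := {c | Term.const c ∈ t}

lemma constsT_finite (t : List (Term C)) : (constsT t).Finite := by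
  have h : constsT t = (Term.const : C → Term C) ⁻¹' {x | x ∈ t} := rfl
  rw [h]
  exact Set.Finite.preimage (fun a _ b _ hab => by injection hab) t.finite_toSet

lemma constsI_finite {K : Instance R C} (hK : K.Finite) : (constsI K).Finite := by
  have h : constsI K = ⋃ f ∈ K, constsT f.args := by
    ext c; simp [constsI, constsT]
  rw [h]
  exact hK.biUnion (fun f _ => constsT_finite f.args)

lemma constsA_finite (as : List (Atom R C)) : (constsA as).Finite := by
  have h : constsA as = ⋃ a ∈ {x | x ∈ as}, ((Sum.inr : C → Var ⊕ C) ⁻¹' {x | x ∈ a.args}) := by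
    ext c; simp [constsA]
  rw [h]
  exact (as.finite_toSet).biUnion
    (fun a _ => Set.Finite.preimage (fun x _ y _ hxy => by injection hxy) (a.args.finite_toSet))

end DE
namespace DE
variable {R C : Type}

section Rename
attribute [local instance] Classical.propDecidable
variable (φ : ℕ → C)

def ren : Term C → Term C
  | Term.const c => Term.const c
  | Term.null n => Term.const (φ n)

noncomputable def unren : Term C → Term C
  | Term.const c => if h : ∃ n, φ n = c then Term.null h.choose else Term.const c
  | Term.null n => Term.null n

def good (u : Term C) : Prop := ∀ c, u = Term.const c → c ∉ Set.range φ

lemma unren_ren (hφ : Function.Injective φ) {u : Term C} (hu : good φ u) : unren φ (ren φ u) = u := by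
  cases u with
  | const c =>
    have hno : ¬ ∃ n, φ n = c := fun ⟨n, hn⟩ => hu c rfl ⟨n, hn⟩
    simp [ren, unren, hno]
  | null n =>
    have hex : ∃ m, φ m = φ n := ⟨n, rfl⟩
    simp only [ren, unren, dif_pos hex]
    exact congrArg Term.null (hφ hex.choose_spec)

def mapInst (K : Instance R C) : Instance R C := (Fact.map (ren φ)) '' K

def goodI (K : Instance R C) : Prop := ∀ f ∈ K, ∀ u ∈ f.args, good φ u
def goodA (as : List (Atom R C)) : Prop := ∀ c ∈ constsA (R := R) as, c ∉ Set.range φ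

lemma mapInst_of_nullFree {K : Instance R C} (hK : nullFree K) : mapInst φ K = K := by
  have h : ∀ f ∈ K, Fact.map (ren φ) f = f := by
    intro f hf
    show (⟨f.rel, f.args.map (ren φ)⟩ : Fact R C) = f
    have hargs : f.args.map (ren φ) = f.args := by
      have h1 : f.args.map (ren φ) = f.args.map id := List.map_congr_left (fun u hu => by
        obtain ⟨c, rfl⟩ := hK f hf u hu; rfl)
      rw [h1, List.map_id]
    rw [hargs]
  calc mapInst φ K = id '' K := Set.image_congr h
  _ = K := Set.image_id K

lemma nullFree_mapInst (K : Instance R C) : nullFree (mapInst φ K) := by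
  rintro f ⟨g, _, rfl⟩ u hu
  obtain ⟨w, _, rfl⟩ := List.mem_map.mp hu
  cases w <;> exact ⟨_, rfl⟩

lemma applyAtom_ren (h : Var → Term C) (a : Atom R C) :
    applyAtom (fun v => ren φ (h v)) a = Fact.map (ren φ) (applyAtom h a) := by
  show _ = (⟨(applyAtom h a).rel, (applyAtom h a).args.map (ren φ)⟩ : Fact R C)
  unfold applyAtom
  simp only [List.map_map]
  congr 1
  apply List.map_congr_left
  rintro (v | c) _ <;> rfl

lemma holdsBody_push {K : Instance R C} {h : Var → Term C} {as : List (Atom R C)}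
    (hb : holdsBody K h as) : holdsBody (mapInst φ K) (fun v => ren φ (h v)) as := by
  intro a ha
  rw [applyAtom_ren]
  exact ⟨_, hb a ha, rfl⟩

lemma holdsBody_pull (hφ : Function.Injective φ) {K : Instance R C} {h : Var → Term C} {as : List (Atom R C)}
    (hK : goodI φ K) (has : goodA φ as) (hb : holdsBody (mapInst φ K) h as) :
    holdsBody K (fun v => unren φ (h v)) as := by
  intro a ha
  obtain ⟨g, hg, hfact⟩ := hb a ha
  have hargs : g.args.map (ren φ) = a.args.map (termOf h) := congrArg Fact.args hfact
  have hrel : g.rel = a.rel := congrArg Fact.rel hfact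
  have hkey : a.args.map (termOf (fun v => unren φ (h v))) = g.args := by
    have h0 := congrArg (List.map (unren φ)) hargs
    rw [List.map_map, List.map_map] at h0
    have h1 : g.args.map (unren φ ∘ ren φ) = g.args := by
      have := List.map_congr_left (f := unren φ ∘ ren φ) (g := id)
        (fun u hu => unren_ren φ hφ (hK g hg u hu))
      rw [this, List.map_id]
    have h2 : a.args.map (unren φ ∘ termOf h) = a.args.map (termOf (fun v => unren φ (h v))) := by
      apply List.map_congr_left
      rintro (v | c) hm
      · rfl
      · show unren φ (Term.const c) = Term.const c
        have hno : ¬ ∃ n, φ n = c := fun hex => has c ⟨a, ha, hm⟩ ⟨hex.choose, hex.choose_spec⟩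
        simp [unren, hno]
    rw [← h2, ← h0, h1]
  show applyAtom (fun v => unren φ (h v)) a ∈ K
  have : applyAtom (fun v => unren φ (h v)) a = g := by
    cases g with
    | mk gr ga =>
      unfold applyAtom
      simp only at hrel hkey
      rw [hrel, hkey]
  rw [this]
  exact hg

lemma ren_unren_of_mem (hφ : Function.Injective φ) {K : Instance R C} {h : Var → Term C} {as : List (Atom R C)}
    (hK : goodI φ K) (hb : holdsBody (mapInst φ K) h as) {v : Var}
    (hv : v ∈ varsOf (R := R) as) :
    ren φ (unren φ (h v)) = h v := by
  obtain ⟨a, ha, hm⟩ := hv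
  obtain ⟨g, hg, hfact⟩ := hb a ha
  have hargs : g.args.map (ren φ) = a.args.map (termOf h) := congrArg Fact.args hfact
  have hmem : h v ∈ g.args.map (ren φ) := by
    rw [hargs]; exact List.mem_map.mpr ⟨Sum.inl v, hm, rfl⟩
  obtain ⟨u, hu, hru⟩ := List.mem_map.mp hmem
  rw [← hru, unren_ren φ hφ (hK g hg u hu)]

lemma satTGD_mapInst (hφ : Function.Injective φ) {K : Instance R C} {ρ : TGD R C}
    (hK : goodI φ K) (hb : goodA φ ρ.body) (hh : goodA φ ρ.head)
    (hsat : satTGD K ρ) : satTGD (mapInst φ K) ρ := by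
  intro h hbody
  obtain ⟨g', hag, hhead⟩ := hsat (fun v => unren φ (h v)) (holdsBody_pull φ hφ hK hb hbody)
  refine ⟨fun v => ren φ (g' v), fun v hv => ?_, holdsBody_push φ hhead⟩
  show ren φ (g' v) = h v
  rw [hag v hv]
  exact ren_unren_of_mem φ hφ hK hbody hv

lemma satEGD_mapInst (hφ : Function.Injective φ) {K : Instance R C} {η : EGD R C}
    (hK : goodI φ K) (hb : goodA φ η.body) (hsat : satEGD K η) :
    satEGD (mapInst φ K) η := by
  intro h hbody
  by_cases heq : η.lhs = η.rhs
  · rw [heq]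
  have hg : holdsBody K (fun v => unren φ (h v)) η.body := holdsBody_pull φ hφ hK hb hbody
  set g : Var → Term C := fun v => unren φ (h v) with hgdef
  by_cases hl : η.lhs ∈ varsOf (R := R) η.body
  · by_cases hr : η.rhs ∈ varsOf (R := R) η.body
    · have hgl := hsat g hg
      have h1 := ren_unren_of_mem φ hφ hK hbody hl
      have h2 := ren_unren_of_mem φ hφ hK hbody hr
      rw [← h1, ← h2]
      exact congrArg (ren φ) hgl
    · exfalso
      have key : ∀ x : Term C, g η.lhs = x := by
        intro x
        have hgx : holdsBody K (Function.update g η.rhs x) η.body :=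
          holdsBody_congr (fun v hv => by
            rw [Function.update_apply, if_neg (fun hvr : v = η.rhs => hr (hvr ▸ hv))]) hg
        have hres := hsat _ hgx
        rwa [Function.update_apply, Function.update_apply, if_neg heq, if_pos rfl] at hres
      have hcontra := (key (Term.null 0)).symm.trans (key (Term.null 1))
      exact absurd hcontra (by simp)
  · exfalso
    have key : ∀ x : Term C, x = g η.rhs := by
      intro x
      have hgx : holdsBody K (Function.update g η.lhs x) η.body :=
        holdsBody_congr (fun v hv => by
          rw [Function.update_apply, if_neg (fun hvl : v = η.lhs => hl (hvl ▸ hv))]) hg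
      have hres := hsat _ hgx
      rwa [Function.update_apply, Function.update_apply, if_pos rfl,
        if_neg (fun hh' : η.rhs = η.lhs => heq hh'.symm)] at hres
    have hcontra := (key (Term.null 0)).trans (key (Term.null 1)).symm
    exact absurd hcontra (by simp)

end Rename
end DE
namespace DE
variable {R C : Type}

noncomputable def constOf [Nonempty C] : Term C → C
  | Term.const c => c
  | Term.null _ => Classical.arbitrary C

@[simp] lemma constOf_const [Nonempty C] (c : C) : constOf (Term.const c) = c := rfl

lemma mem_args_applyAtom {h : Var → Term C} {a : Atom R C} {v : Var}
    (hm : (Sum.inl v : Var ⊕ C) ∈ a.args) : h v ∈ (applyAtom h a).args :=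
  List.mem_map.mpr ⟨Sum.inl v, hm, rfl⟩

lemma witness_exists [Nonempty C] {M : Instance R C} (hM : nullFree M) {ρ : TGD R C}
    (hwf : ρ.wf) (hsat : satTGD M ρ) (cs : List C) :
    ∃ w : Var → C,
      (∃ h0 : Var → C, ρ.frontier.map h0 = cs ∧ holdsBody M (constHom h0) ρ.body) →
      ∀ h : Var → C, ρ.frontier.map h = cs → (∀ z ∈ ρ.exvars, h z = w z) →
        holdsBody M (constHom h) ρ.head := by
  by_cases hex : ∃ h0 : Var → C, ρ.frontier.map h0 = cs ∧ holdsBody M (constHom h0) ρ.body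
  · obtain ⟨h0, hcs0, hb0⟩ := hex
    obtain ⟨h', hag, hhead⟩ := hsat (constHom h0) hb0
    refine ⟨fun v => constOf (h' v), fun _ h hcs hcoh => ?_⟩
    intro a ha
    have heqa : applyAtom (constHom h) a = applyAtom h' a := by
      apply applyAtom_congr
      intro v hv
      have hvh : v ∈ varsOf (R := R) ρ.head := ⟨a, ha, hv⟩
      rcases hwf.2.2 v hvh with hvf | hvz
      · have h0v : h' v = Term.const (h0 v) := hag v (hwf.1 v hvf)
        have hveq : h v = h0 v := List.map_inj_left.mp (hcs.trans hcs0.symm) v hvf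
        show Term.const (h v) = h' v
        rw [h0v, hveq]
      · have hcv : h v = constOf (h' v) := hcoh v hvz
        obtain ⟨c, hc⟩ := hM _ (hhead a ha) _ (mem_args_applyAtom hv)
        show Term.const (h v) = h' v
        rw [hcv, hc, constOf_const]
    rw [heqa]
    exact hhead a ha
  · exact ⟨fun _ => Classical.arbitrary C, fun hex0 => absurd hex0 hex⟩

lemma classical_to_supportedWith [Nonempty C] {S : Setting R C} (hS : S.wf)
    {I K : Instance R C} (hI : nullFree I) (hK : nullFree K)
    (hcl : classicalSolution S I K) :
    ∃ γ : ExChoice R C, supportedWith S γ I K := by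
  classical
  obtain ⟨hKfin, hST, hT, hE⟩ := hcl
  have hIK : nullFree (I ∪ K) := by
    rintro f (hf | hf)
    exacts [hI f hf, hK f hf]
  have hwT : ∀ ρ, ρ ∈ S.sigmaT → ∀ cs : List C, ∃ w : Var → C,
      (∃ h0 : Var → C, ρ.frontier.map h0 = cs ∧ holdsBody K (constHom h0) ρ.body) →
      ∀ h : Var → C, ρ.frontier.map h = cs → (∀ z ∈ ρ.exvars, h z = w z) →
        holdsBody K (constHom h) ρ.head :=
    fun ρ hρ cs => witness_exists hK (hS ρ (List.mem_append.mpr (Or.inr hρ))) (hT ρ hρ) cs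
  have hwST : ∀ ρ, ρ ∈ S.sigmaST → ∀ cs : List C, ∃ w : Var → C,
      (∃ h0 : Var → C, ρ.frontier.map h0 = cs ∧ holdsBody (I ∪ K) (constHom h0) ρ.body) →
      ∀ h : Var → C, ρ.frontier.map h = cs → (∀ z ∈ ρ.exvars, h z = w z) →
        holdsBody (I ∪ K) (constHom h) ρ.head :=
    fun ρ hρ cs => witness_exists hIK (hS ρ (List.mem_append.mpr (Or.inl hρ))) (hST ρ hρ) cs
  choose w1 hw1 using hwT
  choose w2 hw2 using hwST
  refine ⟨fun ρ cs =>
    if h1 : ρ ∈ S.sigmaT ∧ ∃ h0 : Var → C, ρ.frontier.map h0 = cs ∧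
        holdsBody K (constHom h0) ρ.body
    then w1 ρ h1.1 cs
    else if h2 : ρ ∈ S.sigmaST then w2 ρ h2 cs
    else fun _ => Classical.arbitrary C, ?_, ?_, hE⟩
  · intro ρ hρ h hcoh hbody
    by_cases h1 : ρ ∈ S.sigmaT ∧ ∃ h0 : Var → C,
        ρ.frontier.map h0 = ρ.frontier.map h ∧ holdsBody K (constHom h0) ρ.body
    · have hγ : ∀ z ∈ ρ.exvars, h z = w1 ρ h1.1 (ρ.frontier.map h) z := by
        intro z hz
        have := hcoh z hz
        simpa only [dif_pos h1] using this
      exact holdsBody_mono Set.subset_union_right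
        (hw1 ρ h1.1 (ρ.frontier.map h) h1.2 h rfl hγ)
    · have hγ : ∀ z ∈ ρ.exvars, h z = w2 ρ hρ (ρ.frontier.map h) z := by
        intro z hz
        have := hcoh z hz
        simpa only [dif_neg h1, dif_pos hρ] using this
      exact hw2 ρ hρ (ρ.frontier.map h) ⟨h, rfl, hbody⟩ h rfl hγ
  · intro ρ hρ h hcoh hbody
    have h1 : ρ ∈ S.sigmaT ∧ ∃ h0 : Var → C,
        ρ.frontier.map h0 = ρ.frontier.map h ∧ holdsBody K (constHom h0) ρ.body :=
      ⟨hρ, h, rfl, hbody⟩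
    have hγ : ∀ z ∈ ρ.exvars, h z = w1 ρ h1.1 (ρ.frontier.map h) z := by
      intro z hz
      have := hcoh z hz
      simpa only [dif_pos h1] using this
    exact hw1 ρ h1.1 (ρ.frontier.map h) h1.2 h rfl hγ

lemma exists_minimal_supported {S : Setting R C} (γ : ExChoice R C) {I K : Instance R C}
    (hKfin : K.Finite) (hsup : supportedWith S γ I K) :
    ∃ K', supportedSolution S I K' ∧ K' ⊆ K := by
  have hFin : {L : Instance R C | L ⊆ K ∧ supportedWith S γ I L}.Finite :=
    (hKfin.finite_subsets).subset (fun L hL => hL.1)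
  obtain ⟨L, hL, hmin'⟩ := hFin.exists_minimal ⟨K, subset_rfl, hsup⟩
  have hmin : ∀ L' ∈ {L : Instance R C | L ⊆ K ∧ supportedWith S γ I L}, L' ⊆ L → L = L' :=
    fun L' h1 h2 => (hmin' h1 h2).antisymm h2
  refine ⟨L, ⟨hKfin.subset hL.1, γ, hL.2, ?_⟩, hL.1⟩
  intro L' hL' hsupL'
  exact hL'.ne (hmin L' ⟨hL'.subset.trans hL.1, hsupL'⟩ hL'.subset).symm

end DE
namespace DE
variable {R C : Type}

lemma applyAtom_constHom_nullFree (h : Var → C) (a : Atom R C) :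
    ∀ u ∈ (applyAtom (constHom h) a).args, ∃ c, u = Term.const c := by
  intro u hu
  obtain ⟨x, _, rfl⟩ := List.mem_map.mp hu
  cases x with
  | inl v => exact ⟨h v, rfl⟩
  | inr c => exact ⟨c, rfl⟩

lemma supported_nullFree {S : Setting R C} {I J : Instance R C}
    (hs : supportedSolution S I J) : nullFree J := by
  obtain ⟨hfin, γ, hsup, hmin⟩ := hs
  by_contra hnf
  rw [nullFree] at hnf
  push_neg at hnf
  obtain ⟨f, hfJ, u, hu, hnu⟩ := hnf
  set J' : Instance R C := {g ∈ J | ∀ u ∈ g.args, ∃ c, u = Term.const c} with hJ'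
  have hsub : J' ⊆ J := fun g hg => hg.1
  have hssub : J' ⊂ J := by
    refine ⟨hsub, fun habs => ?_⟩
    obtain ⟨c, hc⟩ := (habs hfJ).2 u hu
    exact hnu c hc
  have hmemJ' : ∀ g, (∀ u ∈ g.args, ∃ c, u = Term.const c) → g ∈ I ∪ J → g ∈ I ∪ J' := by
    rintro g hgc (hg | hg)
    · exact Or.inl hg
    · exact Or.inr ⟨hg, hgc⟩
  apply hmin J' hssub
  refine ⟨?_, ?_, ?_⟩
  · intro ρ hρ h hcoh hbody
    have hbody' : holdsBody (I ∪ J) (constHom h) ρ.body :=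
      holdsBody_mono (Set.union_subset_union_right I hsub) hbody
    intro a ha
    exact hmemJ' _ (applyAtom_constHom_nullFree h a) (hsup.1 ρ hρ h hcoh hbody' a ha)
  · intro ρ hρ h hcoh hbody
    have hbody' : holdsBody J (constHom h) ρ.body := holdsBody_mono hsub hbody
    intro a ha
    exact ⟨hsup.2.1 ρ hρ h hcoh hbody' a ha, applyAtom_constHom_nullFree h a⟩
  · intro η hη h hbody
    exact hsup.2.2 η hη h (holdsBody_mono hsub hbody)

lemma satTGD_of_coh [Nonempty C] {M : Instance R C} (hM : nullFree M) {γ : ExChoice R C}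
    {ρ : TGD R C} (hwf : ρ.wf) (hcoh : satTGDcoh M γ ρ) : satTGD M ρ := by
  classical
  intro h hbody
  set e : Var → C := fun v => constOf (h v) with he
  have hbe : ∀ v ∈ varsOf (R := R) ρ.body, h v = Term.const (e v) := by
    intro v hv
    obtain ⟨a, ha, hm⟩ := hv
    obtain ⟨c, hc⟩ := hM _ (hbody a ha) _ (mem_args_applyAtom hm)
    rw [hc]
    simp [he, hc]
  set h0 : Var → C := fun v => if v ∈ ρ.exvars then γ ρ (ρ.frontier.map e) v else e v with hh0
  have hfr : ρ.frontier.map h0 = ρ.frontier.map e := List.map_congr_left (fun v hv => by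
    have hne : v ∉ ρ.exvars := fun hz => hwf.2.1 v hz (hwf.1 v hv)
    simp [hh0, hne])
  have hcohh : ∀ z ∈ ρ.exvars, h0 z = γ ρ (ρ.frontier.map h0) z := by
    intro z hz
    rw [hfr]
    simp [hh0, hz]
  have hb0 : holdsBody M (constHom h0) ρ.body := by
    refine holdsBody_congr (h := h) ?_ hbody
    intro v hv
    have hvex : v ∉ ρ.exvars := fun hz => hwf.2.1 v hz hv
    rw [hbe v hv]
    simp [constHom, hh0, hvex]
  have hhead := hcoh h0 hcohh hb0
  refine ⟨fun v => if v ∈ varsOf (R := R) ρ.body then h v else constHom h0 v,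
    fun v hv => if_pos hv, ?_⟩
  refine holdsBody_congr (h := constHom h0) ?_ hhead
  intro v hv
  rcases hwf.2.2 v hv with hf | hz
  · have hvb := hwf.1 v hf
    have hvex : v ∉ ρ.exvars := fun hz => hwf.2.1 v hz hvb
    rw [if_pos hvb, hbe v hvb]
    simp [constHom, hh0, hvex]
  · have hvb : v ∉ varsOf (R := R) ρ.body := hwf.2.1 v hz
    rw [if_neg hvb]

lemma supported_classical [Nonempty C] {S : Setting R C} (hS : S.wf)
    {I J : Instance R C} (hI : nullFree I) (hs : supportedSolution S I J) :
    classicalSolution S I J := by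
  have hJnf := supported_nullFree hs
  obtain ⟨hfin, γ, ⟨hST, hT, hE⟩, hmin⟩ := hs
  have hIJ : nullFree (I ∪ J) := by
    rintro f (hf | hf)
    exacts [hI f hf, hJnf f hf]
  refine ⟨hfin, ?_, ?_, hE⟩
  · exact fun ρ hρ => satTGD_of_coh hIJ (hS ρ (List.mem_append.mpr (Or.inl hρ))) (hST ρ hρ)
  · exact fun ρ hρ => satTGD_of_coh hJnf (hS ρ (List.mem_append.mpr (Or.inr hρ))) (hT ρ hρ)

end DE
/-- for positive queries, supported certain answers coincide with
classical certain answers. -/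
theorem scert_eq_cert_for_positive {R C : Type} [Infinite C]
    (S : DE.Setting R C) (hS : S.wf)
    (Q : List (DE.CQ R C)) (hQ : ∀ q ∈ Q, q.safe)
    (I : DE.Instance R C) (hInf : DE.nullFree I) (hIfin : I.Finite) :
    DE.scert S I Q = DE.cert S I Q := by
  classical
  haveI : Nonempty C := inferInstance
  apply Set.Subset.antisymm
  · -- scert ⊆ cert
    intro t ht J hJ
    set Bad : Set C := DE.constsI I ∪ DE.constsI J ∪ DE.constsT t ∪
      (⋃ ρ ∈ S.sigmaST ++ S.sigmaT, DE.constsA (ρ.body ++ ρ.head)) ∪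
      (⋃ η ∈ S.sigmaE, DE.constsA η.body) ∪ (⋃ q ∈ Q, DE.constsA q.body) with hBadDef
    have hBadFin : Bad.Finite := by
      rw [hBadDef]
      refine (((((DE.constsI_finite hIfin).union (DE.constsI_finite hJ.1)).union
        (DE.constsT_finite t)).union ?_).union ?_).union ?_
      · exact (S.sigmaST ++ S.sigmaT).finite_toSet.biUnion (fun ρ _ => DE.constsA_finite _)
      · exact S.sigmaE.finite_toSet.biUnion (fun η _ => DE.constsA_finite _)
      · exact Q.finite_toSet.biUnion (fun q _ => DE.constsA_finite _)
    have hinfc : (Badᶜ : Set C).Infinite := Set.Finite.infinite_compl hBadFin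
    let e : ℕ ↪ (Badᶜ : Set C) := Set.Infinite.natEmbedding _ hinfc
    set φ : ℕ → C := fun n => (e n : C) with hφDef
    have hφinj : Function.Injective φ := fun a b hab => e.injective (Subtype.ext hab)
    have hφBad : ∀ n, φ n ∉ Bad := fun n => (e n).2
    have hBadRange : ∀ c ∈ Bad, c ∉ Set.range φ := by
      rintro c hc ⟨n, hn⟩
      exact hφBad n (hn ▸ hc)
    -- goodness facts
    have hgoodJ : DE.goodI φ J := by
      rintro f hf u hu c rfl
      refine hBadRange c ?_
      rw [hBadDef]
      exact Set.mem_union_left _ (Set.mem_union_left _ (Set.mem_union_left _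
        (Set.mem_union_left _ (Or.inr ⟨f, hf, hu⟩))))
    have hgoodIJ : DE.goodI φ (I ∪ J) := by
      rintro f hf u hu c rfl
      refine hBadRange c ?_
      rw [hBadDef]
      rcases hf with hf | hf
      · exact Set.mem_union_left _ (Set.mem_union_left _ (Set.mem_union_left _
          (Set.mem_union_left _ (Or.inl ⟨f, hf, hu⟩))))
      · exact Set.mem_union_left _ (Set.mem_union_left _ (Set.mem_union_left _
          (Set.mem_union_left _ (Or.inr ⟨f, hf, hu⟩))))
    have hgoodTGDb : ∀ ρ ∈ S.sigmaST ++ S.sigmaT, DE.goodA (R := R) φ ρ.body := by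
      intro ρ hρ c hcA
      refine hBadRange c ?_
      rw [hBadDef]
      refine Set.mem_union_left _ (Set.mem_union_left _ (Set.mem_union_right _ ?_))
      refine Set.mem_iUnion₂.mpr ⟨ρ, hρ, ?_⟩
      obtain ⟨a, ha, hm⟩ := hcA
      exact ⟨a, List.mem_append.mpr (Or.inl ha), hm⟩
    have hgoodTGDh : ∀ ρ ∈ S.sigmaST ++ S.sigmaT, DE.goodA (R := R) φ ρ.head := by
      intro ρ hρ c hcA
      refine hBadRange c ?_
      rw [hBadDef]
      refine Set.mem_union_left _ (Set.mem_union_left _ (Set.mem_union_right _ ?_))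
      refine Set.mem_iUnion₂.mpr ⟨ρ, hρ, ?_⟩
      obtain ⟨a, ha, hm⟩ := hcA
      exact ⟨a, List.mem_append.mpr (Or.inr ha), hm⟩
    have hgoodE : ∀ η ∈ S.sigmaE, DE.goodA (R := R) φ η.body := by
      intro η hη c hcA
      refine hBadRange c ?_
      rw [hBadDef]
      exact Set.mem_union_left _ (Set.mem_union_right _ (Set.mem_iUnion₂.mpr ⟨η, hη, hcA⟩))
    have hgoodQ : ∀ q ∈ Q, DE.goodA (R := R) φ q.body := by
      intro q hq c hcA
      refine hBadRange c ?_
      rw [hBadDef]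
      exact Set.mem_union_right _ (Set.mem_iUnion₂.mpr ⟨q, hq, hcA⟩)
    obtain ⟨hJfin, hSTsat, hTsat, hEsat⟩ := hJ
    have hmapIJ : DE.mapInst φ (I ∪ J) = I ∪ DE.mapInst φ J := by
      show DE.Fact.map (DE.ren φ) '' (I ∪ J) = _
      rw [Set.image_union]
      show DE.mapInst φ I ∪ DE.mapInst φ J = _
      rw [DE.mapInst_of_nullFree φ hInf]
    have hJrfin : (DE.mapInst φ J).Finite := hJfin.image _
    have hJrnf : DE.nullFree (DE.mapInst φ J) := DE.nullFree_mapInst φ J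
    have hJrcl : DE.classicalSolution S I (DE.mapInst φ J) := by
      refine ⟨hJrfin, ?_, ?_, ?_⟩
      · intro ρ hρ
        rw [← hmapIJ]
        exact DE.satTGD_mapInst φ hφinj hgoodIJ
          (hgoodTGDb ρ (List.mem_append.mpr (Or.inl hρ)))
          (hgoodTGDh ρ (List.mem_append.mpr (Or.inl hρ))) (hSTsat ρ hρ)
      · intro ρ hρ
        exact DE.satTGD_mapInst φ hφinj hgoodJ
          (hgoodTGDb ρ (List.mem_append.mpr (Or.inr hρ)))
          (hgoodTGDh ρ (List.mem_append.mpr (Or.inr hρ))) (hTsat ρ hρ)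
      · intro η hη
        exact DE.satEGD_mapInst φ hφinj hgoodJ (hgoodE η hη) (hEsat η hη)
    obtain ⟨γ, hsup⟩ := DE.classical_to_supportedWith hS hInf hJrnf hJrcl
    obtain ⟨Jm, hJmsup, hJmsub⟩ := DE.exists_minimal_supported γ hJrfin hsup
    have htr : t ∈ DE.evalUCQ Q (DE.mapInst φ J) := DE.evalUCQ_mono hJmsub (ht Jm hJmsup)
    obtain ⟨q, hq, h, hb, htq⟩ := htr
    have hgb : DE.holdsBody J (fun v => DE.unren φ (h v)) q.body :=
      DE.holdsBody_pull φ hφinj hgoodJ (hgoodQ q hq) hb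
    refine ⟨q, hq, fun v => DE.unren φ (h v), hgb, ?_⟩
    rw [htq]
    apply List.map_congr_left
    intro v hv
    have hvb : v ∈ DE.varsOf (R := R) q.body := hQ q hq v hv
    have hr := DE.ren_unren_of_mem φ hφinj hgoodJ hb hvb
    cases hu : DE.unren φ (h v) with
    | null n =>
      exfalso
      rw [hu] at hr
      have hconst : DE.Term.const (φ n) = h v := hr
      apply hφBad n
      rw [hBadDef]
      refine Set.mem_union_left _ (Set.mem_union_left _ (Set.mem_union_left _
        (Set.mem_union_right _ ?_)))
      show DE.Term.const (φ n) ∈ t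
      rw [htq, hconst]
      exact List.mem_map.mpr ⟨v, hv, rfl⟩
    | const c =>
      rw [hu] at hr
      have hch : DE.Term.const c = h v := hr
      exact hch.symm
  · -- cert ⊆ scert
    intro t ht J hJ
    exact ht J (DE.supported_classical hS hInf hJ)
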